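/- Let d ≥ 2, a₀ ∈ ℝ^d, let U ⊆ ℝ^{d−1} be open, and let F_L : ℝ^{d−1} → ℝ^d be continuously differentiable on U. Let J_K(ξ,η) be the d×d matrix whose first column is F_L(η) − a₀ and whose remaining columns are ξ times the columns of the Jacobian matrix of F_L at η. Assume the Duffy transformation F_K(ξ,η) = ξ(F_L(η) − a₀) + a₀ is injective on (0,1) × U and det J_K(1,η) ≠ 0 for all η ∈ U. Then for every Lebesgue-integrable function g on K := F_K((0,1) × U), ∫_K g(x) dx = ∫_{(0,1) × U} g(F_K(ξ,η)) · ξ^{d−1} · |det J_K(1,η)| d(ξ,η). -/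

import Mathlib

open Matrix MeasureTheory

/-- Writing `d = n + 1` with `n ≥ 1` (so `d ≥ 2`), let `F_L` be `C¹` on an
open set `U ⊆ ℝ^{d−1}`, let `J_K(ξ,η)` be the matrix with first column `F_L η − a₀` and
remaining columns `ξ` times the columns of the Jacobian of `F_L` at `η`, suppose the
Duffy transformation `F_K(ξ,η) = ξ • (F_L η − a₀) + a₀` is injective on `(0,1) × U` and
`det J_K(1,η) ≠ 0` on `U`.  Then for every Lebesgue-integrable `g` on
`K = F_K((0,1) × U)`,
`∫_K g = ∫_{(0,1)×U} g(F_K(ξ,η)) ξ^{d−1} |det J_K(1,η)|`. -/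
theorem duffy_change_of_variables
    (n : ℕ) (hn : 1 ≤ n)
    (a₀ : Fin (n + 1) → ℝ)
    (FL : (Fin n → ℝ) → (Fin (n + 1) → ℝ))
    (U : Set (Fin n → ℝ)) (hU : IsOpen U)
    (hFL : ContDiffOn ℝ 1 FL U)
    (JK : ℝ → (Fin n → ℝ) → Matrix (Fin (n + 1)) (Fin (n + 1)) ℝ)
    (hJK : ∀ (ξ : ℝ) (η : Fin n → ℝ) (i : Fin (n + 1)) (j : Fin (n + 1)),
      JK ξ η i j =
        Fin.cases ((FL η - a₀) i) (fun j' => ξ * fderiv ℝ FL η (Pi.single j' 1) i) j)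
    (hinj : Set.InjOn (fun p : ℝ × (Fin n → ℝ) => p.1 • (FL p.2 - a₀) + a₀)
      (Set.Ioo 0 1 ×ˢ U))
    (hdet : ∀ η ∈ U, (JK 1 η).det ≠ 0)
    (g : (Fin (n + 1) → ℝ) → ℝ)
    (hg : IntegrableOn g
      ((fun p : ℝ × (Fin n → ℝ) => p.1 • (FL p.2 - a₀) + a₀) '' (Set.Ioo 0 1 ×ˢ U))) :
    ∫ x in (fun p : ℝ × (Fin n → ℝ) => p.1 • (FL p.2 - a₀) + a₀) '' (Set.Ioo 0 1 ×ˢ U),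
        g x
      = ∫ p in Set.Ioo (0:ℝ) 1 ×ˢ U,
          g (p.1 • (FL p.2 - a₀) + a₀) * p.1 ^ n * |(JK 1 p.2).det| := by
  classical
  set Φ : ℝ × (Fin n → ℝ) → (Fin (n + 1) → ℝ) :=
    fun p => p.1 • (FL p.2 - a₀) + a₀ with hΦdef
  set T : Set (ℝ × (Fin n → ℝ)) := Set.Ioo (0:ℝ) 1 ×ˢ U with hTdef
  -- the measurable equivalence
  set e : (Fin (n + 1) → ℝ) ≃ᵐ ℝ × (Fin n → ℝ) :=
    MeasurableEquiv.piFinSuccAbove (fun _ : Fin (n + 1) => ℝ) 0 with hedef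
  have he_apply : ∀ x : Fin (n + 1) → ℝ, e x = (x 0, Fin.tail x) := by
    intro x
    have : (e x).2 = Fin.tail x := by
      funext j
      show x (Fin.succAbove 0 j) = x j.succ
      rw [Fin.succAbove_zero]
    exact Prod.ext rfl this
  have he_mp : MeasurePreserving e volume volume :=
    volume_preserving_piFinSuccAbove (fun _ : Fin (n + 1) => ℝ) 0
  -- the set upstairs
  set s : Set (Fin (n + 1) → ℝ) := e ⁻¹' T with hsdef
  have hT_meas : MeasurableSet T := measurableSet_Ioo.prod hU.measurableSet
  have hs_meas : MeasurableSet s := e.measurable hT_meas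
  -- the map upstairs
  set f : (Fin (n + 1) → ℝ) → (Fin (n + 1) → ℝ) := fun x => Φ (e x) with hfdef
  -- derivative of FL
  have hFLdiff : ∀ η ∈ U, HasFDerivAt FL (fderiv ℝ FL η) η := by
    intro η hη
    exact ((hFL.differentiableOn one_ne_zero).differentiableAt (hU.mem_nhds hη)).hasFDerivAt
  -- tail as a continuous linear map
  set tailL : (Fin (n + 1) → ℝ) →L[ℝ] (Fin n → ℝ) :=
    ContinuousLinearMap.pi (fun j : Fin n => ContinuousLinearMap.proj j.succ) with htailL
  have htailL_apply : ∀ x, tailL x = Fin.tail x := fun x => rfl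
  -- derivative of f
  set f' : (Fin (n + 1) → ℝ) → (Fin (n + 1) → ℝ) →L[ℝ] (Fin (n + 1) → ℝ) :=
    fun x => x 0 • ((fderiv ℝ FL (Fin.tail x)).comp tailL)
      + (ContinuousLinearMap.proj (R := ℝ) (φ := fun _ : Fin (n + 1) => ℝ) 0).smulRight
          (FL (Fin.tail x) - a₀) with hf'def
  have hf'_at : ∀ x : Fin (n + 1) → ℝ, (e x).2 ∈ U → HasFDerivAt f (f' x) x := by
    intro x hx'
    rw [he_apply] at hx'
    have hx : Fin.tail x ∈ U := hx'
    set projL : (Fin (n + 1) → ℝ) →L[ℝ] ℝ :=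
      ContinuousLinearMap.proj (R := ℝ) (φ := fun _ : Fin (n + 1) => ℝ) 0 with hprojL
    have h1 : HasFDerivAt (⇑projL) projL x := projL.hasFDerivAt
    have h2 : HasFDerivAt (fun y : Fin (n + 1) → ℝ => FL (Fin.tail y) - a₀)
        ((fderiv ℝ FL (Fin.tail x)).comp tailL) x := by
      have := ((hFLdiff _ hx).comp x tailL.hasFDerivAt).sub_const a₀
      exact this
    have h3 := (h1.smul h2).add_const a₀
    convert h3 using 1
    all_goals rfl
  -- the matrix of f'
  have hmat : ∀ x : Fin (n + 1) → ℝ,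
      LinearMap.toMatrix' (f' x : (Fin (n + 1) → ℝ) →ₗ[ℝ] (Fin (n + 1) → ℝ))
        = JK (x 0) (Fin.tail x) := by
    intro x
    ext i j
    have hf'app : ∀ (v : Fin (n + 1) → ℝ),
        f' x v i = x 0 * (fderiv ℝ FL (Fin.tail x)) (Fin.tail v) i
          + v 0 * (FL (Fin.tail x) - a₀) i := by
      intro v
      simp [f', smul_eq_mul, htailL_apply]
    have hone : (fun j' : Fin (n + 1) => if j' = j then (1:ℝ) else 0) = Pi.single j 1 := by
      funext k
      simp [Pi.single_apply]
    rw [LinearMap.toMatrix'_apply, hJK, ContinuousLinearMap.coe_coe]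
    rw [hf'app]
    induction j using Fin.cases with
    | zero =>
      have htail : Fin.tail (α := fun _ : Fin (n + 1) => ℝ) (Pi.single 0 1) = 0 := by
        funext k
        simp [Fin.tail, Pi.single_apply, (Fin.succ_ne_zero k)]
      rw [htail]
      simp
    | succ j' =>
      have htail : Fin.tail (α := fun _ : Fin (n + 1) => ℝ) (Pi.single (Fin.succ j') 1)
          = Pi.single j' 1 := by
        funext k
        simp [Fin.tail, Pi.single_apply, Fin.succ_inj]
      rw [htail]
      simp [Pi.single_apply, Fin.succ_ne_zero j']
  -- determinant of f'
  have hdet_f' : ∀ x : Fin (n + 1) → ℝ,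
      (f' x).det = (JK (x 0) (Fin.tail x)).det := by
    intro x
    rw [ContinuousLinearMap.det, ← LinearMap.det_toMatrix' , hmat]
  -- column scaling
  have hscale : ∀ (ξ : ℝ) (η : Fin n → ℝ),
      (JK ξ η).det = ξ ^ n * (JK 1 η).det := by
    intro ξ η
    have hEq : JK ξ η = JK 1 η * Matrix.diagonal (Fin.cons 1 fun _ : Fin n => ξ) := by
      ext i j
      rw [Matrix.mul_diagonal, hJK, hJK]
      induction j using Fin.cases with
      | zero => simp
      | succ j' => simp [mul_comm]
    rw [hEq, Matrix.det_mul, Matrix.det_diagonal, Fin.prod_cons, Finset.prod_const,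
      Finset.card_univ, Fintype.card_fin]
    ring
  -- image identification
  have himg : f '' s = Φ '' T := by
    show (Φ ∘ ⇑e) '' s = Φ '' T
    rw [Set.image_comp Φ e, hsdef, Set.image_preimage_eq _ e.surjective]
  -- injectivity upstairs
  have hinj' : Set.InjOn f s := by
    intro x hx y hy hxy
    have := hinj hx hy hxy
    exact e.injective this
  -- change of variables
  have hcov := integral_image_eq_integral_abs_det_fderiv_smul volume hs_meas
    (fun x hx => (hf'_at x (Set.mem_prod.mp hx).2).hasFDerivWithinAt) hinj' g
  rw [← himg, hcov]
  -- now rewrite the integrand on s and transfer the integral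
  have hcongr : ∫ x in s, |(f' x).det| • g (f x)
      = ∫ x in s, (fun p : ℝ × (Fin n → ℝ) =>
          g (Φ p) * p.1 ^ n * |(JK 1 p.2).det|) (e x) := by
    apply setIntegral_congr_fun hs_meas
    intro x hx
    have hxT : e x ∈ T := hx
    rw [he_apply] at hxT
    have hx0 : (0:ℝ) < x 0 := hxT.1.1
    simp only [he_apply]
    rw [hdet_f', hscale, abs_mul, abs_pow, abs_of_pos hx0]
    show (x 0) ^ n * |(JK 1 (Fin.tail x)).det| * g (f x)
      = g (Φ (x 0, Fin.tail x)) * (x 0) ^ n * |(JK 1 (Fin.tail x)).det|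
    have : f x = Φ (x 0, Fin.tail x) := by
      show Φ (e x) = Φ (x 0, Fin.tail x)
      rw [he_apply]
    rw [this]; ring
  rw [hcongr]
  exact he_mp.setIntegral_preimage_emb e.measurableEmbedding
    (fun p : ℝ × (Fin n → ℝ) => g (Φ p) * p.1 ^ n * |(JK 1 p.2).det|) T
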